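/- (Structure Theorem, with the explicit description of its ingredients.) For every integer s ≥ max{1, (n−2)(d−1)d}, the s-fold sumset decomposes as the disjoint union sA = C₁ ⊔ [c₁, sd−c₂] ⊔ (sd−C₂), where [c₁, sd−c₂] = {m ∈ ℤ : c₁ ≤ m ≤ sd−c₂} and sd−C₂ = {sd−c : c ∈ C₂}. -/

import Mathlib

open scoped BigOperators

namespace SumsetsCurve

/-- The `s`-fold sumset of `A = {a 0, …, a (n-1)}`:
all sums of `s` elements of `A` (with `0A = {0}`). -/
def sumset (n : ℕ) (a : ℕ → ℕ) (s : ℕ) : Set ℕ :=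
  {x | ∃ f : Fin s → ℕ, (∀ i, f i < n) ∧ x = ∑ i, a (f i)}

/-- The numerical semigroup (additive submonoid of ℕ) generated by `B`. -/
def numSG (B : Set ℕ) : Set ℕ := (AddSubmonoid.closure B : AddSubmonoid ℕ)

/-- `S₁`, the numerical semigroup generated by `A`. -/
def S1 (n : ℕ) (a : ℕ → ℕ) : Set ℕ := numSG {x | ∃ i < n, a i = x}

/-- `S₂`, the numerical semigroup generated by `d - A`. -/
def S2 (n d : ℕ) (a : ℕ → ℕ) : Set ℕ := numSG {x | ∃ i < n, d - a i = x}

/-- The conductor of `S ⊆ ℕ`: the least `c` with `c + ℕ ⊆ S`. -/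
noncomputable def conductor (S : Set ℕ) : ℕ := sInf {c | ∀ m, c ≤ m → m ∈ S}

/-- The genus of `S ⊆ ℕ`: the number of gaps `|ℕ \ S|`. -/
noncomputable def genus (S : Set ℕ) : ℕ := Set.ncard {x : ℕ | x ∉ S}

/-- `C = S ∩ [0, conductor S - 2]` (the inequality is taken in ℤ). -/
def Cpart (S : Set ℕ) : Set ℕ := {x | x ∈ S ∧ (x : ℤ) ≤ (conductor S : ℤ) - 2}

/-- The decomposition `sA = C₁ ⊔ [c₁, sd - c₂] ⊔ (sd - C₂)` of the Structure Theorem,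
viewed inside ℤ. -/
def structDecomp (n d : ℕ) (a : ℕ → ℕ) (s : ℕ) : Prop :=
  (Nat.cast '' sumset n a s : Set ℤ)
      = (Nat.cast '' Cpart (S1 n a))
        ∪ Set.Icc ((conductor (S1 n a) : ℤ)) ((s * d : ℤ) - (conductor (S2 n d a) : ℤ))
        ∪ ((fun c => (s * d : ℤ) - c) '' (Nat.cast '' Cpart (S2 n d a)))
    ∧ Disjoint (Nat.cast '' Cpart (S1 n a) : Set ℤ)
        (Set.Icc ((conductor (S1 n a) : ℤ)) ((s * d : ℤ) - (conductor (S2 n d a) : ℤ)))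
    ∧ Disjoint (Nat.cast '' Cpart (S1 n a) : Set ℤ)
        ((fun c => (s * d : ℤ) - c) '' (Nat.cast '' Cpart (S2 n d a)))
    ∧ Disjoint
        (Set.Icc ((conductor (S1 n a) : ℤ)) ((s * d : ℤ) - (conductor (S2 n d a) : ℤ)))
        ((fun c => (s * d : ℤ) - c) '' (Nat.cast '' Cpart (S2 n d a)))

/-- `σ(A)`: the least `σ` such that the Structure Theorem decomposition holds
for all `s ≥ σ`. -/
noncomputable def sigmaA (n d : ℕ) (a : ℕ → ℕ) : ℕ :=
  sInf {σ | ∀ s, σ ≤ s → structDecomp n d a s}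

/-- `r(A)`: the least `r` such that `|sA| = sd + 1 - g₁ - g₂` for all `s ≥ r`
(the regularity of the Hilbert function of `k[C_A]`). -/
noncomputable def rA (n d : ℕ) (a : ℕ → ℕ) : ℕ :=
  sInf {r | ∀ s, r ≤ s →
    ((sumset n a s).ncard : ℤ)
      = (s : ℤ) * d + 1 - genus (S1 n a) - genus (S2 n d a)}

/-- The homogeneous semigroup `S ⊆ ℕ²` generated by `{(a, d-a) : a ∈ A}`. -/
def SS (n d : ℕ) (a : ℕ → ℕ) : Set (ℕ × ℕ) :=
  (AddSubmonoid.closure {p : ℕ × ℕ | ∃ i < n, p = (a i, d - a i)} : AddSubmonoid (ℕ × ℕ))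

/-- The Apery set `AP_S = {p ∈ S : p - (0,d) ∉ S, p - (d,0) ∉ S}`. -/
def APS (n d : ℕ) (a : ℕ → ℕ) : Set (ℕ × ℕ) :=
  {p ∈ SS n d a |
    (¬ ∃ q ∈ SS n d a, q + (0, d) = p) ∧ (¬ ∃ q ∈ SS n d a, q + (d, 0) = p)}

/-- The exceptional set
`E_S = {p ∈ S : p - (0,d) ∈ S, p - (d,0) ∈ S, p - (d,d) ∉ S}`. -/
def ES (n d : ℕ) (a : ℕ → ℕ) : Set (ℕ × ℕ) :=
  {p ∈ SS n d a |
    (∃ q ∈ SS n d a, q + (0, d) = p) ∧ (∃ q ∈ SS n d a, q + (d, 0) = p) ∧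
      (¬ ∃ q ∈ SS n d a, q + (d, d) = p)}

/-- The level `L_s = {(x,y) ∈ ℕ² : x + y = sd}`. -/
def Lev (d s : ℕ) : Set (ℕ × ℕ) := {p | p.1 + p.2 = s * d}

/-- `AP_s = AP_S ∩ L_s`. -/
def APs (n d : ℕ) (a : ℕ → ℕ) (s : ℕ) : Set (ℕ × ℕ) := APS n d a ∩ Lev d s

/-- `E_s = E_S ∩ L_s`. -/
def Es (n d : ℕ) (a : ℕ → ℕ) (s : ℕ) : Set (ℕ × ℕ) := ES n d a ∩ Lev d s

/-- `m(AP_S) = max {s : AP_s ≠ ∅}`. -/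
noncomputable def mAP (n d : ℕ) (a : ℕ → ℕ) : ℕ := sSup {s | APs n d a s ≠ ∅}

/-- The Apery set of `S₁` with respect to `d`: `{x ∈ S₁ : x - d ∉ S₁}`. -/
def Ap1 (n d : ℕ) (a : ℕ → ℕ) : Set ℕ := {x ∈ S1 n a | ¬ ∃ y ∈ S1 n a, y + d = x}

/-- The Apery set of `S₂` with respect to `d`: `{x ∈ S₂ : x - d ∉ S₂}`. -/
def Ap2 (n d : ℕ) (a : ℕ → ℕ) : Set ℕ := {x ∈ S2 n d a | ¬ ∃ y ∈ S2 n d a, y + d = x}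

/-- `G`, the subgroup of ℤ² generated by `S`. -/
def G (n d : ℕ) (a : ℕ → ℕ) : AddSubgroup (ℤ × ℤ) :=
  AddSubgroup.closure {p | ∃ i < n, p = ((a i : ℤ), (d : ℤ) - (a i : ℤ))}

/-- `S₁` viewed inside ℤ. -/
def S1Z (n : ℕ) (a : ℕ → ℕ) : Set ℤ := Nat.cast '' S1 n a

/-- `S₂` viewed inside ℤ. -/
def S2Z (n d : ℕ) (a : ℕ → ℕ) : Set ℤ := Nat.cast '' S2 n d a

/-- `S' = G ∩ (S₁ × S₂)`. -/
def Sprime (n d : ℕ) (a : ℕ → ℕ) : Set (ℤ × ℤ) :=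
  {p | p ∈ G n d a ∧ p.1 ∈ S1Z n a ∧ p.2 ∈ S2Z n d a}

/-- The homogeneous semigroup `S` viewed inside ℤ². -/
def SZ (n d : ℕ) (a : ℕ → ℕ) : Set (ℤ × ℤ) :=
  (fun p : ℕ × ℕ => ((p.1 : ℤ), (p.2 : ℤ))) '' SS n d a


/-! ### Auxiliary lemmas for the Structure Theorem -/

section StructureAux

variable {n d : ℕ} {b : ℕ → ℕ}

lemma zero_mem_sumset_zero : (0 : ℕ) ∈ sumset n b 0 :=
  ⟨fun i => i.elim0, fun i => i.elim0, by simp⟩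

lemma gen_mem_sumset_one {i : ℕ} (hi : i < n) : b i ∈ sumset n b 1 :=
  ⟨fun _ => i, fun _ => hi, by simp⟩

lemma sumset_add_mem {x y s t : ℕ} (hx : x ∈ sumset n b s) (hy : y ∈ sumset n b t) :
    x + y ∈ sumset n b (s + t) := by
  obtain ⟨f, hf, rfl⟩ := hx
  obtain ⟨g, hg, rfl⟩ := hy
  refine ⟨Fin.append f g, ?_, ?_⟩
  · intro i
    refine Fin.addCases (fun j => ?_) (fun j => ?_) i
    · rw [Fin.append_left]; exact hf j
    · rw [Fin.append_right]; exact hg j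
  · rw [Fin.sum_univ_add]
    congr 1
    · exact Finset.sum_congr rfl fun j _ => by rw [Fin.append_left]
    · exact Finset.sum_congr rfl fun j _ => by rw [Fin.append_right]

lemma sumset_mono_zero {j : ℕ} (hj : j < n) (hbj : b j = 0) {x s t : ℕ} (hst : s ≤ t)
    (hx : x ∈ sumset n b s) : x ∈ sumset n b t := by
  induction t, hst using Nat.le_induction with
  | base => exact hx
  | succ t ht ih =>
    have := sumset_add_mem ih (gen_mem_sumset_one hj)
    rwa [hbj, add_zero] at this

lemma nsmul_mem_sumset {i : ℕ} (hi : i < n) (c : ℕ) : c * b i ∈ sumset n b c := by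
  induction c with
  | zero => simpa using zero_mem_sumset_zero
  | succ c ih =>
    have := sumset_add_mem ih (gen_mem_sumset_one hi)
    rwa [show c * b i + b i = (c+1) * b i by ring] at this

lemma finsum_mem_sumset (T : Finset ℕ) (c : ℕ → ℕ) (hT : ∀ i ∈ T, i < n) :
    (∑ i ∈ T, c i * b i) ∈ sumset n b (∑ i ∈ T, c i) := by
  induction T using Finset.cons_induction with
  | empty => simpa using zero_mem_sumset_zero
  | cons i T hiT ih =>
    rw [Finset.sum_cons, Finset.sum_cons]
    exact sumset_add_mem (nsmul_mem_sumset (hT i (Finset.mem_cons_self i T)) (c i))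
      (ih fun j hj => hT j (Finset.mem_cons_of_mem hj))

lemma sumset_le_bound (hble : ∀ i < n, b i ≤ d) {x s : ℕ} (hx : x ∈ sumset n b s) :
    x ≤ s * d := by
  obtain ⟨f, hf, rfl⟩ := hx
  calc ∑ i, b (f i) ≤ ∑ _i : Fin s, d := Finset.sum_le_sum fun i _ => hble _ (hf i)
    _ = s * d := by simp [Finset.card_univ, mul_comm]

lemma sumset_dual (hble : ∀ i < n, b i ≤ d) {x s : ℕ} (hx : x ∈ sumset n b s) :
    s * d - x ∈ sumset n (fun i => d - b i) s := by
  have hxle : x ≤ s * d := sumset_le_bound hble hx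
  obtain ⟨f, hf, rfl⟩ := hx
  refine ⟨f, hf, ?_⟩
  have h1 : ∑ i : Fin s, (d - b (f i)) + ∑ i, b (f i) = s * d := by
    rw [← Finset.sum_add_distrib]
    rw [Finset.sum_congr rfl fun (i : Fin s) _ => Nat.sub_add_cancel (hble _ (hf i))]
    simp [Finset.card_univ, mul_comm]
  show s * d - (∑ i, b (f i)) = ∑ i : Fin s, (d - b (f i))
  omega

lemma sumset_congr_lt (h : ∀ i < n, b i = (fun i => b i) i) : True := trivial

lemma sumset_ext {b' : ℕ → ℕ} (h : ∀ i < n, b i = b' i) (s : ℕ) :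
    sumset n b s = sumset n b' s := by
  ext x
  constructor <;> rintro ⟨f, hf, rfl⟩ <;> refine ⟨f, hf, Finset.sum_congr rfl fun i _ => ?_⟩
  · exact h _ (hf i)
  · exact (h _ (hf i)).symm

lemma mem_numSG_iff {x : ℕ} :
    x ∈ numSG {x | ∃ i < n, b i = x} ↔ ∃ s, x ∈ sumset n b s := by
  constructor
  · intro hx
    replace hx : x ∈ AddSubmonoid.closure {x | ∃ i < n, b i = x} := hx
    induction hx using AddSubmonoid.closure_induction with
    | mem y hy => obtain ⟨i, hi, rfl⟩ := hy; exact ⟨1, gen_mem_sumset_one hi⟩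
    | zero => exact ⟨0, zero_mem_sumset_zero⟩
    | add y z hy hz ihy ihz =>
      obtain ⟨s, hs⟩ := ihy; obtain ⟨t, ht⟩ := ihz
      exact ⟨s + t, sumset_add_mem hs ht⟩
  · rintro ⟨s, f, hf, rfl⟩
    exact AddSubmonoid.sum_mem _ fun i _ => AddSubmonoid.subset_closure ⟨f i, hf i, rfl⟩

lemma exists_small_rep {x : ℕ} (hx : x ∈ numSG {x | ∃ i < n, b i = x}) :
    ∃ k ≤ x, x ∈ sumset n b k := by
  replace hx : x ∈ AddSubmonoid.closure {x | ∃ i < n, b i = x} := hx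
  induction hx using AddSubmonoid.closure_induction with
  | mem y hy =>
    obtain ⟨i, hi, rfl⟩ := hy
    rcases Nat.eq_zero_or_pos (b i) with h | h
    · exact ⟨0, by omega, by rw [h]; exact zero_mem_sumset_zero⟩
    · exact ⟨1, h, gen_mem_sumset_one hi⟩
  | zero => exact ⟨0, le_rfl, zero_mem_sumset_zero⟩
  | add y z hy hz ihy ihz =>
    obtain ⟨k, hk, hky⟩ := ihy; obtain ⟨l, hl, hlz⟩ := ihz
    exact ⟨k + l, Nat.add_le_add hk hl, sumset_add_mem hky hlz⟩

lemma exists_int_gcd_rep (T : Finset ℕ) (g : ℕ → ℕ) :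
    ∃ z : ℕ → ℤ, ∑ i ∈ T, z i * (g i : ℤ) = ((T.gcd g : ℕ) : ℤ) := by
  induction T using Finset.induction_on with
  | empty => exact ⟨0, by simp⟩
  | @insert i T hiT ih =>
    obtain ⟨z, hz⟩ := ih
    refine ⟨fun j => if j = i then Nat.gcdA (g i) (T.gcd g)
      else Nat.gcdB (g i) (T.gcd g) * z j, ?_⟩
    rw [Finset.sum_insert hiT, Finset.gcd_insert]
    have h2 : ∑ j ∈ T, (if j = i then Nat.gcdA (g i) (T.gcd g)
        else Nat.gcdB (g i) (T.gcd g) * z j) * (g j : ℤ)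
        = Nat.gcdB (g i) (T.gcd g) * ∑ j ∈ T, z j * (g j : ℤ) := by
      rw [Finset.mul_sum]
      refine Finset.sum_congr rfl fun j hj => ?_
      rw [if_neg (by rintro rfl; exact hiT hj)]; ring
    show (if i = i then Nat.gcdA (g i) (T.gcd g) else Nat.gcdB (g i) (T.gcd g) * z i) * (g i : ℤ)
        + ∑ x ∈ T, (if x = i then Nat.gcdA (g i) (T.gcd g)
            else Nat.gcdB (g i) (T.gcd g) * z x) * (g x : ℤ)
        = ((GCDMonoid.gcd (g i) (T.gcd g) : ℕ) : ℤ)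
    rw [if_pos rfl, h2, hz]
    have h3 := Nat.gcd_eq_gcd_ab (g i) (T.gcd g)
    have h5 : ((GCDMonoid.gcd (g i) (T.gcd g) : ℕ) : ℤ) = ((Nat.gcd (g i) (T.gcd g) : ℕ) : ℤ) := rfl
    rw [h5, h3]; ring

lemma exists_residue_rep {z : ℕ → ℤ} (hd : 0 < d)
    (hz1 : (d : ℤ) ∣ (∑ i ∈ Finset.Icc 1 (n-2), z i * (b i : ℤ)) - 1)
    (hT : ∀ i ∈ Finset.Icc 1 (n-2), i < n) (r : ℕ) :
    ∃ k ≤ (n-2)*(d-1), ∃ w, w ∈ sumset n b k ∧ (d : ℤ) ∣ (r : ℤ) - (w : ℤ) := by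
  set T := Finset.Icc 1 (n-2) with hTdef
  set c : ℕ → ℕ := fun i => ((r * z i) % d).toNat with hcdef
  have hd' : (0 : ℤ) < d := by exact_mod_cast hd
  have hcbound : ∀ i, c i ≤ d - 1 := by
    intro i
    have h1 : 0 ≤ (r * z i) % (d : ℤ) := Int.emod_nonneg _ hd'.ne'
    have h2 : (r * z i) % (d : ℤ) < d := Int.emod_lt_of_pos _ hd'
    simp only [hcdef]
    omega
  have hceq : ∀ i, (c i : ℤ) = (r * z i) % d := by
    intro i
    simp only [hcdef]
    exact Int.toNat_of_nonneg (Int.emod_nonneg _ hd'.ne')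
  refine ⟨∑ i ∈ T, c i, ?_, ∑ i ∈ T, c i * b i, finsum_mem_sumset T c hT, ?_⟩
  · calc ∑ i ∈ T, c i ≤ ∑ _i ∈ T, (d-1) := Finset.sum_le_sum fun i _ => hcbound i
      _ = (n-2) * (d-1) := by
        rw [Finset.sum_const, hTdef, Nat.card_Icc]
        simp [smul_eq_mul]
  · have key : ∀ i ∈ T, (d : ℤ) ∣ (c i : ℤ) - r * z i := by
      intro i _
      refine ⟨-(r * z i / d), ?_⟩
      rw [hceq i, Int.emod_def]; ring
    have h1 : (d : ℤ) ∣ ∑ i ∈ T, ((c i : ℤ) - r * z i) * (b i : ℤ) :=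
      Finset.dvd_sum fun i hi => (key i hi).mul_right _
    have h2 : (d : ℤ) ∣ (r : ℤ) * ((∑ i ∈ T, z i * (b i : ℤ)) - 1) := hz1.mul_left _
    have e1 : ∑ i ∈ T, ((c i : ℤ) - r * z i) * (b i : ℤ)
        = (∑ i ∈ T, (c i : ℤ) * (b i : ℤ)) - r * ∑ i ∈ T, z i * (b i : ℤ) := by
      rw [Finset.mul_sum, ← Finset.sum_sub_distrib]
      exact Finset.sum_congr rfl fun i _ => by ring
    have e2 : ((∑ i ∈ T, c i * b i : ℕ) : ℤ) = ∑ i ∈ T, (c i : ℤ) * (b i : ℤ) := by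
      push_cast; rfl
    have goal_eq : (r : ℤ) - ((∑ i ∈ T, c i * b i : ℕ) : ℤ)
        = -((∑ i ∈ T, (c i : ℤ) * (b i : ℤ)) - r * ∑ i ∈ T, z i * (b i : ℤ))
          - r * ((∑ i ∈ T, z i * (b i : ℤ)) - 1) := by
      rw [e2]; ring
    rw [goal_eq, ← e1]
    exact dvd_sub (dvd_neg.mpr h1) h2

/-- Representation of any large enough `m` with controlled number of summands. -/
lemma exists_rep_of_big {z : ℕ → ℤ} (hd : 0 < d)
    (hz1 : (d : ℤ) ∣ (∑ i ∈ Finset.Icc 1 (n-2), z i * (b i : ℤ)) - 1)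
    (hT : ∀ i ∈ Finset.Icc 1 (n-2), i < n)
    (hble : ∀ i < n, b i ≤ d) (hdg : ∃ j < n, b j = d)
    {m : ℕ} (hK : (n-2)*(d-1)*d ≤ m) :
    ∃ k t, k ≤ (n-2)*(d-1) ∧ t * d ≤ m ∧ m ∈ sumset n b (k + t) := by
  obtain ⟨k, hk, w, hw, hdvd⟩ := exists_residue_rep hd hz1 hT m
  have hwle : w ≤ k * d := sumset_le_bound hble hw
  have hwK : w ≤ (n-2)*(d-1)*d := hwle.trans (Nat.mul_le_mul_right d hk)
  have hwm : w ≤ m := hwK.trans hK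
  have hdvd' : (d : ℕ) ∣ m - w := by
    have h : (d : ℤ) ∣ ((m - w : ℕ) : ℤ) := by
      rw [Nat.cast_sub hwm]; exact hdvd
    exact_mod_cast h
  obtain ⟨t, ht⟩ := hdvd'
  rw [Nat.mul_comm] at ht
  obtain ⟨jd, hjdn, hjd⟩ := hdg
  have htd : t * d ∈ sumset n b t := by
    have h6 := nsmul_mem_sumset (b := b) hjdn t
    rwa [hjd] at h6
  have hmw : m = w + t * d := by omega
  refine ⟨k, t, hk, by omega, ?_⟩
  rw [hmw]
  exact sumset_add_mem hw htd

/-- Main half lemma: membership in `sA` for elements of the semigroup below `sd/2`. -/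
lemma main_half {z : ℕ → ℤ} (hd2 : 2 ≤ d)
    (h0 : ∃ j < n, b j = 0) (hdg : ∃ j < n, b j = d) (hble : ∀ i < n, b i ≤ d)
    (hz1 : (d : ℤ) ∣ (∑ i ∈ Finset.Icc 1 (n-2), z i * (b i : ℤ)) - 1)
    (hT : ∀ i ∈ Finset.Icc 1 (n-2), i < n)
    {s m : ℕ} (hs : (n-2)*(d-1)*d ≤ s)
    (hm : m ∈ numSG {x | ∃ i < n, b i = x}) (h2m : 2*m ≤ s*d) :
    m ∈ sumset n b s := by
  obtain ⟨j0, hj0n, hj0⟩ := h0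
  rcases le_or_gt m ((n-2)*(d-1)*d) with hK | hK
  · obtain ⟨k, hk, hmk⟩ := exists_small_rep hm
    exact sumset_mono_zero hj0n hj0 ((hk.trans hK).trans hs) hmk
  · obtain ⟨k, t, hk, htm, hmem⟩ := exists_rep_of_big (by omega) hz1 hT hble hdg hK.le
    refine sumset_mono_zero hj0n hj0 ?_ hmem
    have h2t : 2*t ≤ s := by
      have h1 : (2*t) * d ≤ s * d := by
        calc (2*t) * d = 2 * (t*d) := by ring
          _ ≤ 2 * m := by omega
          _ ≤ s * d := h2m
      exact Nat.le_of_mul_le_mul_right h1 (by omega)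
    have h2k : 2*k ≤ s := by
      calc 2*k = k*2 := by ring
        _ ≤ ((n-2)*(d-1))*d := Nat.mul_le_mul hk hd2
        _ ≤ s := hs
    omega

end StructureAux

/-- **Structure Theorem** (Nathanson): for every `s ≥ max{1, (n-2)(d-1)d}`, the sumset `sA`
decomposes as the disjoint union `C₁ ⊔ [c₁, sd-c₂] ⊔ (sd - C₂)`. -/
theorem structure_theorem (n d : ℕ) (a : ℕ → ℕ)
    (hn : 4 ≤ n)
    (ha0 : a 0 = 0)
    (had : a (n - 1) = d)
    (hmono : ∀ i j, i < j → j ≤ n - 1 → a i < a j)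
    (hgcd : (Finset.Icc 1 (n - 1)).gcd a = 1) :
    ∀ s : ℕ, max 1 ((n - 2) * (d - 1) * d) ≤ s → structDecomp n d a s := by
  intro s hs
  have hd2 : 2 ≤ d := by
    have h01 : a 0 < a 1 := hmono 0 1 (by omega) (by omega)
    have h12 : a 1 < a 2 := hmono 1 2 (by omega) (by omega)
    have h2d : a 2 ≤ a (n-1) := by
      rcases eq_or_lt_of_le (show 2 ≤ n - 1 by omega) with h | h
      · rw [← h]
      · exact (hmono 2 (n-1) h (le_refl _)).le
    omega
  have hdpos : 0 < d := by omega
  have hble : ∀ i < n, a i ≤ d := by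
    intro i hi
    rcases eq_or_lt_of_le (show i ≤ n - 1 by omega) with h | h
    · rw [h, had]
    · exact (had ▸ hmono i (n-1) h (le_refl _)).le
  set b : ℕ → ℕ := fun i => d - a i with hbdef
  have hbleB : ∀ i < n, b i ≤ d := fun i _ => Nat.sub_le _ _
  have hT : ∀ i ∈ Finset.Icc 1 (n-2), i < n := by
    intro i hi
    have := (Finset.mem_Icc.mp hi).2; omega
  -- Bezout coefficients
  obtain ⟨z, hz⟩ := exists_int_gcd_rep (Finset.Icc 1 (n-1)) a
  rw [hgcd] at hz
  have hsplit : ∑ i ∈ Finset.Icc 1 (n-1), z i * (a i : ℤ)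
      = (∑ i ∈ Finset.Icc 1 (n-2), z i * (a i : ℤ)) + z (n-1) * (a (n-1) : ℤ) := by
    rw [show n - 1 = (n-2) + 1 by omega]
    rw [Finset.sum_Icc_succ_top (by omega)]
  have hsum : (∑ i ∈ Finset.Icc 1 (n-2), z i * (a i : ℤ)) = 1 - z (n-1) * (d : ℤ) := by
    rw [hsplit, had] at hz
    push_cast at hz
    linarith
  have hzA : (d : ℤ) ∣ (∑ i ∈ Finset.Icc 1 (n-2), z i * (a i : ℤ)) - 1 :=
    ⟨-(z (n-1)), by rw [hsum]; ring⟩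
  have hzB : (d : ℤ) ∣ (∑ i ∈ Finset.Icc 1 (n-2), (-z i) * (b i : ℤ)) - 1 := by
    have e : ∀ i ∈ Finset.Icc 1 (n-2), (-z i) * ((b i : ℕ) : ℤ)
        = z i * (a i : ℤ) - (d : ℤ) * z i := by
      intro i hi
      have h1 : a i ≤ d := hble i (hT i hi)
      have h2 : ((b i : ℕ) : ℤ) = (d : ℤ) - (a i : ℤ) := by
        simp only [hbdef]; omega
      rw [h2]; ring
    rw [Finset.sum_congr rfl e, Finset.sum_sub_distrib]
    obtain ⟨q, hq⟩ := hzA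
    refine ⟨q - ∑ i ∈ Finset.Icc 1 (n-2), z i, ?_⟩
    have h3 : (∑ i ∈ Finset.Icc 1 (n-2), (d : ℤ) * z i)
        = (d : ℤ) * ∑ i ∈ Finset.Icc 1 (n-2), z i := by rw [Finset.mul_sum]
    rw [h3, mul_sub]
    linarith [hq]
  -- size bounds
  have hsK : (n-2)*(d-1)*d ≤ s := le_trans (le_max_right 1 _) hs
  have h2K : 2*((n-2)*(d-1)*d) ≤ s*d := by
    calc 2*((n-2)*(d-1)*d) = ((n-2)*(d-1)*d)*2 := by ring
      _ ≤ ((n-2)*(d-1)*d)*d := Nat.mul_le_mul_left _ hd2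
      _ ≤ s*d := Nat.mul_le_mul_right d hsK
  -- semigroups contain all large numbers
  have hS1big : ∀ m, (n-2)*(d-1)*d ≤ m → m ∈ S1 n a := by
    intro m hm
    obtain ⟨k, t, _, _, hmem⟩ :=
      exists_rep_of_big hdpos hzA hT hble ⟨n-1, by omega, had⟩ hm
    exact (mem_numSG_iff).mpr ⟨k+t, hmem⟩
  have hb0 : b (n-1) = 0 := by simp [hbdef, had]
  have hbd : b 0 = d := by simp [hbdef, ha0]
  have hS2big : ∀ m, (n-2)*(d-1)*d ≤ m → m ∈ S2 n d a := by
    intro m hm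
    obtain ⟨k, t, _, _, hmem⟩ :=
      exists_rep_of_big hdpos hzB hT hbleB ⟨0, by omega, hbd⟩ hm
    exact (mem_numSG_iff).mpr ⟨k+t, hmem⟩
  -- conductor facts
  have cond_facts : ∀ S : Set ℕ, (∀ m, (n-2)*(d-1)*d ≤ m → m ∈ S) →
      (∀ m, conductor S ≤ m → m ∈ S) ∧ conductor S ≤ (n-2)*(d-1)*d ∧
      (∀ m, m ∈ S → m + 1 ≠ conductor S) := by
    intro S hbig
    have hne : (n-2)*(d-1)*d ∈ {c : ℕ | ∀ m, c ≤ m → m ∈ S} := fun m hm => hbig m hm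
    have hne' : {c : ℕ | ∀ m, c ≤ m → m ∈ S}.Nonempty := ⟨_, hne⟩
    have hmem : ∀ m, conductor S ≤ m → m ∈ S := Nat.sInf_mem hne'
    refine ⟨hmem, Nat.sInf_le hne, ?_⟩
    intro m hmS hEq
    have hmU : m ∈ {c : ℕ | ∀ m', c ≤ m' → m' ∈ S} := by
      intro m' hm'
      rcases eq_or_lt_of_le hm' with h | h
      · exact h ▸ hmS
      · exact hmem m' (by omega)
    have h2 : conductor S ≤ m := Nat.sInf_le hmU
    omega
  obtain ⟨hc1mem, hc1K, hc1gap⟩ := cond_facts (S1 n a) hS1big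
  obtain ⟨hc2mem, hc2K, hc2gap⟩ := cond_facts (S2 n d a) hS2big
  -- characterization of the sumset
  have hextba : sumset n (fun i => d - b i) s = sumset n a s :=
    sumset_ext (fun i hi => by
      simp only [hbdef]; exact Nat.sub_sub_self (hble i hi)) s
  have char : ∀ m, m ∈ sumset n a s ↔ (m ≤ s*d ∧ m ∈ S1 n a ∧ s*d - m ∈ S2 n d a) := by
    intro m
    constructor
    · intro hm
      have h1 : m ≤ s*d := sumset_le_bound hble hm
      have h2 : m ∈ S1 n a := mem_numSG_iff.mpr ⟨s, hm⟩
      have h3 : s*d - m ∈ sumset n b s := sumset_dual hble hm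
      exact ⟨h1, h2, mem_numSG_iff.mpr ⟨s, h3⟩⟩
    · rintro ⟨h1, h2, h3⟩
      rcases le_or_gt (2*m) (s*d) with h | h
      · exact main_half hd2 ⟨0, by omega, ha0⟩ ⟨n-1, by omega, had⟩ hble hzA hT hsK h2 h
      · have h2m' : 2*(s*d - m) ≤ s*d := by omega
        have hm' : (s*d - m) ∈ sumset n b s :=
          main_half hd2 ⟨n-1, by omega, hb0⟩ ⟨0, by omega, hbd⟩ hbleB hzB hT hsK h3 h2m'
        have hdual := sumset_dual hbleB hm'
        rw [hextba] at hdual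
        rwa [Nat.sub_sub_self h1] at hdual
  refine ⟨?_, ?_, ?_, ?_⟩
  · -- the set equality
    ext x
    simp only [Set.mem_union, Set.mem_image, Set.mem_Icc]
    constructor
    · rintro ⟨m, hm, rfl⟩
      obtain ⟨h1, h2, h3⟩ := (char m).mp hm
      by_cases hcase1 : m + 2 ≤ conductor (S1 n a)
      · exact Or.inl (Or.inl ⟨m, ⟨h2, by omega⟩, rfl⟩)
      · by_cases hcase2 : m + conductor (S2 n d a) ≤ s*d
        · have hc1m : conductor (S1 n a) ≤ m := by
            by_contra hcon
            push_neg at hcon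
            have h4 : m + 1 = conductor (S1 n a) := by omega
            exact hc1gap m h2 h4
          exact Or.inl (Or.inr ⟨by exact_mod_cast hc1m, by omega⟩)
        · push_neg at hcase2
          have hc2m : s*d - m + 2 ≤ conductor (S2 n d a) := by
            by_contra hcon
            push_neg at hcon
            have h4 : (s*d - m) + 1 = conductor (S2 n d a) := by omega
            exact hc2gap _ h3 h4
          exact Or.inr ⟨((s*d - m : ℕ) : ℤ), ⟨s*d - m, ⟨h3, by omega⟩, rfl⟩, by omega⟩
    · rintro ((⟨m, ⟨hmS, hm2⟩, rfl⟩ | ⟨hx1, hx2⟩) | ⟨y, ⟨m, ⟨hmS, hm2⟩, rfl⟩, rfl⟩)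
      · have hm2' : m + 2 ≤ conductor (S1 n a) := by omega
        have h2m : 2*m ≤ s*d := by omega
        exact ⟨m, main_half hd2 ⟨0, by omega, ha0⟩ ⟨n-1, by omega, had⟩
          hble hzA hT hsK hmS h2m, rfl⟩
      · have hx0 : 0 ≤ x := le_trans (Int.natCast_nonneg _) hx1
        lift x to ℕ using hx0 with m
        have h1 : conductor (S1 n a) ≤ m := by exact_mod_cast hx1
        have h2 : m + conductor (S2 n d a) ≤ s*d := by omega
        exact ⟨m, (char m).mpr ⟨by omega, hc1mem m h1, hc2mem _ (by omega)⟩, rfl⟩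
      · have hm2' : m + 2 ≤ conductor (S2 n d a) := by omega
        have h2m : 2*m ≤ s*d := by omega
        have hm' : m ∈ sumset n b s :=
          main_half hd2 ⟨n-1, by omega, hb0⟩ ⟨0, by omega, hbd⟩ hbleB hzB hT hsK hmS h2m
        have hdual := sumset_dual hbleB hm'
        rw [hextba] at hdual
        refine ⟨s*d - m, hdual, ?_⟩
        have hmsd : m ≤ s*d := by omega
        omega
  · rw [Set.disjoint_left]
    rintro x ⟨m, ⟨_, hm2⟩, rfl⟩ ⟨hx1, _⟩
    omega
  · rw [Set.disjoint_left]
    rintro x ⟨m, ⟨_, hm2⟩, rfl⟩ ⟨y, ⟨m', ⟨_, hm2'⟩, rfl⟩, heq⟩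
    have heq' : (s : ℤ) * (d : ℤ) - (m' : ℤ) = (m : ℤ) := heq
    omega
  · rw [Set.disjoint_left]
    rintro x ⟨_, hx2⟩ ⟨y, ⟨m', ⟨_, hm2'⟩, rfl⟩, heq⟩
    have heq' : (s : ℤ) * (d : ℤ) - (m' : ℤ) = x := heq
    omega

end SumsetsCurve
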